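/- Let G be a finite abelian group, H ≤ G a subgroup, and suppose S ⊆ H is formally dual to T ⊆ Ĝ. Then T is invariant under translation by every element of the annihilator H^⊥ = {y ∈ Ĝ : y(x) = 1 for all x ∈ H}. -/

import Mathlib

open scoped Classical

theorem stmt_9 {G : Type*} [AddCommGroup G] [Fintype G] (H : AddSubgroup G)
    (S : Finset G) (T : Finset (AddChar G ℂ))
    (hS : S.Nonempty) (hSH : ∀ v ∈ S, v ∈ H)
    (hdual : ∀ x : G,
      ‖∑ w ∈ T, w x‖ ^ 2 =
        (T.card : ℝ) ^ 2 / (S.card : ℝ) *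
          ((S ×ˢ S).filter fun p => x = p.1 - p.2).card) :
    ∀ h : AddChar G ℂ, (∀ x ∈ H, h x = 1) → T.image (fun w => w + h) = T := by
  intro h hh
  have key : ∀ x : G, x ∉ H → (∑ w ∈ T, w x) = 0 := by
    intro x hx
    have hfilter : ((S ×ˢ S).filter fun p => x = p.1 - p.2) = ∅ := by
      rw [Finset.filter_eq_empty_iff]
      rintro ⟨a, b⟩ hp heq
      rw [Finset.mem_product] at hp
      exact hx (heq ▸ AddSubgroup.sub_mem H (hSH _ hp.1) (hSH _ hp.2))
    have h2 := hdual x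
    rw [hfilter] at h2
    simp only [Finset.card_empty, Nat.cast_zero, mul_zero] at h2
    have h3 : ‖∑ w ∈ T, w x‖ = 0 := by
      have := sq_nonneg (‖∑ w ∈ T, w x‖)
      nlinarith [norm_nonneg (∑ w ∈ T, w x)]
    exact norm_eq_zero.1 h3
  have N : ∀ v : AddChar G ℂ,
      (∑ x : G, (∑ w ∈ T, w x) * v (-x)) = if v ∈ T then (Fintype.card G : ℂ) else 0 := by
    intro v
    simp only [Finset.sum_mul]
    rw [Finset.sum_comm]
    have : ∀ w : AddChar G ℂ, (∑ x : G, w x * v (-x)) = if w = v then (Fintype.card G : ℂ) else 0 := by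
      intro w
      have : (∑ x : G, (w - v) x) = if w - v = 0 then ((Fintype.card G : ℕ) : ℂ) else 0 :=
        AddChar.sum_eq_ite (w - v)
      simpa [AddChar.sub_apply, sub_eq_zero] using this
    simp only [this]
    simp [Finset.sum_ite_eq]
  have hmem : ∀ v : AddChar G ℂ, v + h ∈ T ↔ v ∈ T := by
    intro v
    have hNeq : (∑ x : G, (∑ w ∈ T, w x) * (v + h) (-x))
        = ∑ x : G, (∑ w ∈ T, w x) * v (-x) := by
      apply Finset.sum_congr rfl
      intro x _
      by_cases hx : x ∈ H
      · rw [AddChar.add_apply, hh _ (neg_mem hx), mul_one]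
      · rw [key x hx, zero_mul, zero_mul]
    have hc : (Fintype.card G : ℂ) ≠ 0 := Nat.cast_ne_zero.2 Fintype.card_ne_zero
    have := (N (v + h)).symm.trans (hNeq.trans (N v))
    by_cases h1 : v + h ∈ T <;> by_cases h2 : v ∈ T <;>
      simp [h1, h2] at this ⊢ <;> first | exact hc this | exact hc this.symm
  ext w
  simp only [Finset.mem_image]
  constructor
  · rintro ⟨v, hv, rfl⟩
    exact (hmem v).2 hv
  · intro hw
    refine ⟨w - h, ?_, sub_add_cancel w h⟩
    have := (hmem (w - h))
    rw [sub_add_cancel] at this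
    exact this.1 hw
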